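/- Let Y be a discrete random variable and S a finite set of discrete random variables with Y ∉ S, and let E ⊆ S be the set of essential variables for Y. Then Y has a unique Markov boundary within S if and only if E is a Markov boundary of Y within S (equivalently, if and only if Y ⊥ (S \ E) | E). -/
import Mathlib


open scoped BigOperators

noncomputable section

/-- `p` is a probability mass function on the finite type `Ω`. -/
def IsDist {Ω : Type*} [Fintype Ω] (p : Ω → ℝ) : Prop :=
  (∀ w, 0 ≤ p w) ∧ ∑ w, p w = 1

/-- Total variation distance between two distributions on the same finite type. -/
def tvDist {Ω : Type*} [Fintype Ω] (p q : Ω → ℝ) : ℝ :=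
  (∑ w, |p w - q w|) / 2

variable {ι : Type*} [Fintype ι] [DecidableEq ι]
variable {α : ι → Type*} [∀ i, Fintype (α i)] [∀ i, DecidableEq (α i)]

/-- Marginal probability, under joint pmf `p`, of the event that the variables in the
collection `A` take the values prescribed by the configuration `x`. -/
def margProb (p : (∀ i, α i) → ℝ) (A : Finset ι) (x : ∀ i, α i) : ℝ :=
  ∑ w : ∀ i, α i, if ∀ i ∈ A, w i = x i then p w else 0

/-- Conditional independence of the collections `A` and `B` given the collection `C`:
`f(a, b | c) = f(a | c) f(b | c)` whenever `f(c) > 0` (stated in multiplied-out form). -/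
def CondIndep (p : (∀ i, α i) → ℝ) (A B C : Finset ι) : Prop :=
  ∀ x : ∀ i, α i, 0 < margProb p C x →
    margProb p (A ∪ B ∪ C) x * margProb p C x =
      margProb p (A ∪ C) x * margProb p (B ∪ C) x

/-- `M` is a Markov blanket of the variable `y` within the collection `T`. -/
def MarkovBlanket (p : (∀ i, α i) → ℝ) (y : ι) (T M : Finset ι) : Prop :=
  M ⊆ T ∧ CondIndep p {y} (T \ M) M

/-- `M` is a Markov boundary of `y` within `T`: a Markov blanket no proper subset of
which is a Markov blanket. -/
def MarkovBoundary (p : (∀ i, α i) → ℝ) (y : ι) (T M : Finset ι) : Prop :=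
  MarkovBlanket p y T M ∧ ∀ M' ⊂ M, ¬ MarkovBlanket p y T M'

/-- Mutual information between the collections `A` and `B`
(with the convention `0 · log(junk) = 0` on zero-probability terms). -/
def MI (p : (∀ i, α i) → ℝ) (A B : Finset ι) : ℝ :=
  ∑ w : ∀ i, α i, p w *
    Real.log (margProb p (A ∪ B) w / (margProb p A w * margProb p B w))

/-- Conditional mutual information between collections `A` and `B` given `C`
(with the convention `0 · log(junk) = 0` on zero-probability terms). -/
def CMI (p : (∀ i, α i) → ℝ) (A B C : Finset ι) : ℝ :=
  ∑ w : (∀ i, α i), p w *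
    Real.log ((margProb p (A ∪ B ∪ C) w * margProb p C w) /
      (margProb p (A ∪ C) w * margProb p (B ∪ C) w))



/-! ### Auxiliary lemmas -/

lemma margProb_nonneg (p : (∀ i, α i) → ℝ) (hp : ∀ w, 0 ≤ p w) (A : Finset ι) (x : ∀ i, α i) :
    0 ≤ margProb p A x := by
  refine Finset.sum_nonneg fun w _ => ?_
  split <;> simp [hp w]

lemma margProb_mono (p : (∀ i, α i) → ℝ) (hp : ∀ w, 0 ≤ p w) {A B : Finset ι} (hAB : A ⊆ B)
    (x : ∀ i, α i) : margProb p B x ≤ margProb p A x := by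
  refine Finset.sum_le_sum fun w _ => ?_
  by_cases h : ∀ i ∈ B, w i = x i
  · rw [if_pos h, if_pos fun i hi => h i (hAB hi)]
  · rw [if_neg h]; split <;> simp [hp w]

lemma margProb_congr (p : (∀ i, α i) → ℝ) {A : Finset ι} {x x' : ∀ i, α i}
    (h : ∀ i ∈ A, x i = x' i) : margProb p A x = margProb p A x' := by
  refine Finset.sum_congr rfl fun w _ => ?_
  have : (∀ i ∈ A, w i = x i) ↔ (∀ i ∈ A, w i = x' i) :=
    forall₂_congr fun i hi => by rw [h i hi]
  rw [if_congr this rfl rfl]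

lemma margProb_split (p : (∀ i, α i) → ℝ) {A : Finset ι} {j : ι} (hj : j ∉ A) (x : ∀ i, α i) :
    margProb p A x = ∑ v : α j, margProb p (insert j A) (Function.update x j v) := by
  unfold margProb
  rw [Finset.sum_comm]
  refine Finset.sum_congr rfl fun w _ => ?_
  have key : ∀ v : α j, (∀ i ∈ insert j A, w i = Function.update x j v i) ↔
      (v = w j ∧ ∀ i ∈ A, w i = x i) := by
    intro v
    constructor
    · intro h
      have h1 := h j (Finset.mem_insert_self j A)
      rw [Function.update_self] at h1
      refine ⟨h1.symm, fun i hi => ?_⟩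
      have h2 := h i (Finset.mem_insert_of_mem hi)
      rwa [Function.update_of_ne (by rintro rfl; exact hj hi)] at h2
    · rintro ⟨rfl, h⟩
      intro i hi
      rcases Finset.mem_insert.1 hi with rfl | hiA
      · rw [Function.update_self]
      · rw [Function.update_of_ne (by rintro rfl; exact hj hiA)]; exact h i hiA
  calc (if ∀ i ∈ A, w i = x i then p w else 0)
      = ∑ v : α j, if v = w j then (if ∀ i ∈ A, w i = x i then p w else 0) else 0 := by
        rw [Finset.sum_ite_eq' Finset.univ (w j) (fun _ => if ∀ i ∈ A, w i = x i then p w else 0)]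
        simp
    _ = ∑ v : α j, if ∀ i ∈ insert j A, w i = Function.update x j v i then p w else 0 := by
        refine Finset.sum_congr rfl fun v _ => ?_
        rw [if_congr (key v) rfl rfl, ite_and]

lemma condIndep_all (p : (∀ i, α i) → ℝ) (hp : ∀ w, 0 ≤ p w) {A B C : Finset ι}
    (h : CondIndep p A B C) (x : ∀ i, α i) :
    margProb p (A ∪ B ∪ C) x * margProb p C x =
      margProb p (A ∪ C) x * margProb p (B ∪ C) x := by
  rcases (margProb_nonneg p hp C x).lt_or_eq with hc | hc
  · exact h x hc
  · have h1 : margProb p (A ∪ C) x = 0 :=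
      le_antisymm (hc ▸ margProb_mono p hp Finset.subset_union_right x)
        (margProb_nonneg p hp _ x)
    rw [← hc, h1, mul_zero, zero_mul]

lemma weak_union (p : (∀ i, α i) → ℝ) (hp : ∀ w, 0 ≤ p w) {y W : ι} {B C : Finset ι}
    (hWB : W ∈ B) (hWC : W ∉ C) (hyW : y ≠ W) (hyB : y ∉ B) (hyC : y ∉ C)
    (h : CondIndep p {y} B C) :
    CondIndep p {y} {W} (B.erase W ∪ C) := by
  intro x hx
  have hWD : W ∉ ({y} ∪ B.erase W ∪ C : Finset ι) := by
    simp [Finset.mem_erase, hWC, hyW.symm]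
  have hWD' : W ∉ (B.erase W ∪ C : Finset ι) := by
    simp [Finset.mem_erase, hWC]
  have e1 : ({y} ∪ {W} ∪ (B.erase W ∪ C) : Finset ι) = {y} ∪ B ∪ C := by
    ext i
    simp only [Finset.mem_union, Finset.mem_singleton, Finset.mem_erase]
    constructor
    · rintro ((rfl | rfl) | (⟨_, hiB⟩ | hiC)) <;> tauto
    · rintro ((rfl | hiB) | hiC)
      · tauto
      · by_cases hiW : i = W <;> tauto
      · tauto
  have e2 : ({W} ∪ (B.erase W ∪ C) : Finset ι) = B ∪ C := by
    ext i
    simp only [Finset.mem_union, Finset.mem_singleton, Finset.mem_erase]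
    constructor
    · rintro (rfl | (⟨_, hiB⟩ | hiC)) <;> tauto
    · rintro (hiB | hiC)
      · by_cases hiW : i = W <;> tauto
      · tauto
  have e3 : insert W ({y} ∪ B.erase W ∪ C : Finset ι) = {y} ∪ B ∪ C := by
    rw [Finset.insert_eq, ← e1]
    ext i
    simp only [Finset.mem_union, Finset.mem_singleton]
    tauto
  have e4 : insert W (B.erase W ∪ C : Finset ι) = B ∪ C := by
    rw [Finset.insert_eq]; exact e2
  have hC : 0 < margProb p C x :=
    lt_of_lt_of_le hx (margProb_mono p hp Finset.subset_union_right x)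
  have hi : margProb p ({y} ∪ B ∪ C) x * margProb p C x =
      margProb p ({y} ∪ C) x * margProb p (B ∪ C) x := condIndep_all p hp h x
  have hii : margProb p ({y} ∪ B.erase W ∪ C) x * margProb p C x =
      margProb p ({y} ∪ C) x * margProb p (B.erase W ∪ C) x := by
    rw [margProb_split p hWD x, margProb_split p hWD' x, Finset.sum_mul, Finset.mul_sum]
    refine Finset.sum_congr rfl fun v _ => ?_
    have cC : margProb p C x = margProb p C (Function.update x W v) :=
      margProb_congr p fun i hi =>
        (Function.update_of_ne (show i ≠ W by rintro rfl; exact hWC hi) v x).symm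
    have cyC : margProb p ({y} ∪ C) x = margProb p ({y} ∪ C) (Function.update x W v) :=
      margProb_congr p fun i hi =>
        (Function.update_of_ne (show i ≠ W by
          rintro rfl
          rcases Finset.mem_union.1 hi with h' | h'
          · exact hyW (Finset.mem_singleton.1 h').symm
          · exact hWC h') v x).symm
    rw [e3, e4, cC, cyC]
    exact condIndep_all p hp h (Function.update x W v)
  rw [e1, e2]
  have goal' : margProb p ({y} ∪ B ∪ C) x * margProb p (B.erase W ∪ C) x * margProb p C x =
      margProb p ({y} ∪ (B.erase W ∪ C)) x * margProb p (B ∪ C) x * margProb p C x := by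
    have huu : margProb p ({y} ∪ (B.erase W ∪ C)) x = margProb p ({y} ∪ B.erase W ∪ C) x := by
      rw [Finset.union_assoc]
    rw [huu]
    calc margProb p ({y} ∪ B ∪ C) x * margProb p (B.erase W ∪ C) x * margProb p C x
        = (margProb p ({y} ∪ B ∪ C) x * margProb p C x) * margProb p (B.erase W ∪ C) x := by ring
      _ = (margProb p ({y} ∪ C) x * margProb p (B ∪ C) x) * margProb p (B.erase W ∪ C) x := by
          rw [hi]
      _ = (margProb p ({y} ∪ B.erase W ∪ C) x * margProb p C x) * margProb p (B ∪ C) x := by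
          rw [hii]; ring
      _ = margProb p ({y} ∪ B.erase W ∪ C) x * margProb p (B ∪ C) x * margProb p C x := by ring
  exact mul_right_cancel₀ (ne_of_gt hC) goal'

lemma blanket_top (p : (∀ i, α i) → ℝ) (y : ι) (S : Finset ι) : MarkovBlanket p y S S := by
  refine ⟨subset_rfl, fun x hx => ?_⟩
  rw [Finset.sdiff_self, Finset.union_empty, Finset.empty_union]

lemma blanket_erase_of_nonessential (p : (∀ i, α i) → ℝ) {y W : ι} {S : Finset ι}
    (hWS : W ∈ S) (hni : CondIndep p {y} {W} (S.erase W)) :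
    MarkovBlanket p y S (S.erase W) := by
  refine ⟨Finset.erase_subset W S, ?_⟩
  have hSe : S \ S.erase W = {W} := by
    ext i
    simp only [Finset.mem_sdiff, Finset.mem_erase, Finset.mem_singleton]
    constructor
    · rintro ⟨hiS, h'⟩
      by_contra hiW
      exact h' ⟨hiW, hiS⟩
    · rintro rfl
      exact ⟨hWS, fun h' => h'.1 rfl⟩
  rw [hSe]
  exact hni

lemma essential_ci_of_notMem (p : (∀ i, α i) → ℝ) (hp : ∀ w, 0 ≤ p w) {y : ι} {S : Finset ι}
    (hyS : y ∉ S) {M : Finset ι} (hM : MarkovBlanket p y S M)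
    {W : ι} (hWS : W ∈ S) (hWM : W ∉ M) : CondIndep p {y} {W} (S.erase W) := by
  have hWB : W ∈ S \ M := Finset.mem_sdiff.2 ⟨hWS, hWM⟩
  have hyW : y ≠ W := fun h => hyS (h ▸ hWS)
  have h1 : CondIndep p {y} {W} ((S \ M).erase W ∪ M) :=
    weak_union p hp hWB hWM hyW (fun h => hyS (Finset.mem_sdiff.1 h).1) (fun h => hyS (hM.1 h))
      hM.2
  have e : (S \ M).erase W ∪ M = S.erase W := by
    ext i
    simp only [Finset.mem_union, Finset.mem_erase, Finset.mem_sdiff]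
    constructor
    · rintro (⟨hiW, hiS, _⟩ | hiM)
      · exact ⟨hiW, hiS⟩
      · exact ⟨fun h => hWM (h ▸ hiM), hM.1 hiM⟩
    · rintro ⟨hiW, hiS⟩
      by_cases hiM : i ∈ M <;> tauto
  rwa [e] at h1

lemma exists_boundary_subset (p : (∀ i, α i) → ℝ) {y : ι} {S T : Finset ι}
    (hT : MarkovBlanket p y S T) : ∃ M ⊆ T, MarkovBoundary p y S M := by
  classical
  have hne : (T.powerset.filter fun M => MarkovBlanket p y S M).Nonempty :=
    ⟨T, by simp [hT]⟩
  obtain ⟨M, hM, hmin⟩ := Finset.exists_min_image _ (fun M => M.card) hne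
  simp only [Finset.mem_filter, Finset.mem_powerset] at hM
  refine ⟨M, hM.1, hM.2, fun M' hM' hbl => ?_⟩
  have hle : M.card ≤ M'.card := by
    refine hmin M' ?_
    simp only [Finset.mem_filter, Finset.mem_powerset]
    exact ⟨hM'.subset.trans hM.1, hbl⟩
  exact absurd hle (not_le.mpr (Finset.card_lt_card hM'))


variable [∀ i, Nonempty (α i)]

/-- Theorem 2: `Y` has a unique Markov boundary within `S` iff the set
`E` of essential variables is a Markov boundary of `Y` within `S`, equivalently iff
`Y ⊥ (S \ E) | E`. -/
theorem unique_markov_boundary_iff_essential_set_is_boundary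
    (p : (∀ i, α i) → ℝ) (hp : IsDist p)
    (y : ι) (S : Finset ι) (hyS : y ∉ S)
    (E : Finset ι)
    (hE : ∀ W, W ∈ E ↔ W ∈ S ∧ ¬ CondIndep p {y} {W} (S.erase W)) :
    ((∃! M, MarkovBoundary p y S M) ↔ MarkovBoundary p y S E) ∧
    ((∃! M, MarkovBoundary p y S M) ↔ CondIndep p {y} (S \ E) E) := by
  obtain ⟨hp0, -⟩ := hp
  have hES : E ⊆ S := fun W hW => ((hE W).1 hW).1
  have hEsub : ∀ M, MarkovBlanket p y S M → E ⊆ M := by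
    intro M hM W hW
    by_contra hWM
    obtain ⟨hWS, hness⟩ := (hE W).1 hW
    exact hness (essential_ci_of_notMem p hp0 hyS hM hWS hWM)
  have key1 : MarkovBoundary p y S E → ∃! M, MarkovBoundary p y S M := by
    intro hbE
    refine ⟨E, hbE, fun M hM => ?_⟩
    have h1 : E ⊆ M := hEsub M hM.1
    by_contra hne
    exact hM.2 E (h1.ssubset_of_ne fun h => hne h.symm) hbE.1
  have key3 : CondIndep p {y} (S \ E) E → MarkovBoundary p y S E := by
    intro h
    refine ⟨⟨hES, h⟩, fun M' hM' hbl' => ?_⟩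
    exact hM'.ne (Finset.Subset.antisymm hM'.subset (hEsub M' hbl'))
  have key2 : (∃! M, MarkovBoundary p y S M) → MarkovBoundary p y S E := by
    rintro ⟨M, hM, huniq⟩
    have hme : M = E := by
      apply Finset.Subset.antisymm
      · intro W hWM
        by_contra hWE
        have hWS : W ∈ S := hM.1.1 hWM
        have hni : CondIndep p {y} {W} (S.erase W) := by
          by_contra hci
          exact hWE ((hE W).2 ⟨hWS, hci⟩)
        obtain ⟨M'', hsub, hbd⟩ :=
          exists_boundary_subset p (blanket_erase_of_nonessential p hWS hni)
        have heq : M'' = M := huniq M'' hbd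
        exact (Finset.mem_erase.1 (hsub (heq.symm ▸ hWM))).1 rfl
      · exact hEsub M hM.1
    exact hme ▸ hM
  exact ⟨⟨key2, key1⟩, ⟨fun h => (key2 h).1.2, fun h => key1 (key3 h)⟩⟩


end
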